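/- For every n ≥ 1, S(n+1) ≥ S(n) + ⌈log₂ n⌉. -/

import Mathlib

/-- Applying a single comparator `c = (i, j)`: the minimum of the two values goes to
channel `i` and the maximum to channel `j`. -/
def applyComp {n : ℕ} {α : Type*} [LinearOrder α] (c : Fin n × Fin n) (x : Fin n → α) :
    Fin n → α :=
  fun k => if k = c.1 then min (x c.1) (x c.2)
    else if k = c.2 then max (x c.1) (x c.2)
    else x k

/-- Propagating an input vector through a comparator network (a list of comparators). -/
def runNet {n : ℕ} {α : Type*} [LinearOrder α] (C : List (Fin n × Fin n)) (x : Fin n → α) :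
    Fin n → α :=
  C.foldl (fun v c => applyComp c v) x

/-- A standard comparator network: every comparator `(i, j)` satisfies `i < j`. -/
def Standard {n : ℕ} (C : List (Fin n × Fin n)) : Prop :=
  ∀ c ∈ C, c.1 < c.2

/-- A sorting network: a standard comparator network sorting every Boolean input. -/
def IsSortingNet {n : ℕ} (C : List (Fin n × Fin n)) : Prop :=
  Standard C ∧ ∀ x : Fin n → Bool, Monotone (runNet C x)

/-- The set of outputs of a comparator network on Boolean inputs. -/
def outputs {n : ℕ} (C : List (Fin n × Fin n)) : Set (Fin n → Bool) :=
  Set.range (runNet C)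

/-- The action of a permutation of channels on a set of Boolean vectors. -/
def permSet {n : ℕ} (π : Equiv.Perm (Fin n)) (S : Set (Fin n → Bool)) :
    Set (Fin n → Bool) :=
  (fun x => x ∘ ⇑π.symm) '' S

/-- `Ca` subsumes `Cb`: some permutation maps `outputs Ca` into `outputs Cb`. -/
def Subsumes {n : ℕ} (Ca Cb : List (Fin n × Fin n)) : Prop :=
  ∃ π : Equiv.Perm (Fin n), permSet π (outputs Ca) ⊆ outputs Cb

/-- `sortSize n` is the least size of a sorting network on `n` channels. -/
noncomputable def sortSize (n : ℕ) : ℕ :=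
  sInf {k | ∃ C : List (Fin n × Fin n), IsSortingNet C ∧ C.length = k}

/-- Number of ones in a Boolean vector. -/
def ones {n : ℕ} (x : Fin n → Bool) : ℕ :=
  (Finset.univ.filter fun i => x i = true).card

/-- A (finite) complete set of filters on `n` channels. -/
def CompleteFilters (n : ℕ) (F : Finset (List (Fin n × Fin n))) : Prop :=
  (∃ C : List (Fin n × Fin n), IsSortingNet C ∧ C.length = sortSize n) ↔
    (∃ C ∈ F, ∃ C' : List (Fin n × Fin n),
      IsSortingNet (C ++ C') ∧ (C ++ C').length = sortSize n)

/-- `wSet C x k` is the set of positions `i` such that some output vector of `C`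
with exactly `k` ones has value `x` at position `i`. -/
def wSet {n : ℕ} (C : List (Fin n × Fin n)) (x : Bool) (k : ℕ) : Set (Fin n) :=
  {i | ∃ v ∈ outputs C, ones v = k ∧ v i = x}

namespace VV

@[simp] lemma runNet_nil {n : ℕ} {α : Type*} [LinearOrder α] (x : Fin n → α) :
    runNet [] x = x := rfl

@[simp] lemma runNet_cons {n : ℕ} {α : Type*} [LinearOrder α]
    (c : Fin n × Fin n) (C : List (Fin n × Fin n)) (x : Fin n → α) :
    runNet (c :: C) x = runNet C (applyComp c x) := rfl

lemma runNet_append {n : ℕ} {α : Type*} [LinearOrder α]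
    (A B : List (Fin n × Fin n)) (x : Fin n → α) :
    runNet (A ++ B) x = runNet B (runNet A x) := by
  simp [runNet, List.foldl_append]

/-- Each comparator acts as the identity or a transposition. -/
lemma applyComp_eq_comp {n : ℕ} (c : Fin n × Fin n) (x : Fin n → Bool) :
    ∃ τ : Equiv.Perm (Fin n), applyComp c x = x ∘ τ := by
  rcases le_or_gt (x c.1) (x c.2) with h | h
  · refine ⟨1, funext fun k => ?_⟩
    simp only [applyComp, Function.comp, Equiv.Perm.one_apply]
    split_ifs with h1 h2
    · rw [h1, min_eq_left h]
    · rw [h2, max_eq_right h]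
    · rfl
  · have hne : c.1 ≠ c.2 := by rintro he; rw [he] at h; exact lt_irrefl _ h
    refine ⟨Equiv.swap c.1 c.2, funext fun k => ?_⟩
    simp only [applyComp, Function.comp]
    split_ifs with h1 h2
    · rw [h1, Equiv.swap_apply_left, min_eq_right h.le]
    · rw [h2, Equiv.swap_apply_right, max_eq_left h.le]
    · rw [Equiv.swap_apply_of_ne_of_ne h1 h2]

lemma runNet_eq_comp {n : ℕ} (C : List (Fin n × Fin n)) (x : Fin n → Bool) :
    ∃ τ : Equiv.Perm (Fin n), runNet C x = x ∘ τ := by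
  induction C generalizing x with
  | nil => exact ⟨1, rfl⟩
  | cons c C ih =>
    obtain ⟨τ₀, h₀⟩ := applyComp_eq_comp c x
    obtain ⟨τ₁, h₁⟩ := ih (applyComp c x)
    refine ⟨τ₁.trans τ₀, ?_⟩
    rw [runNet_cons, h₁, h₀]
    rfl

lemma ones_comp_perm {n : ℕ} (x : Fin n → Bool) (τ : Equiv.Perm (Fin n)) :
    ones (x ∘ τ) = ones x := by
  unfold ones
  apply Finset.card_bij (fun i _ => τ i)
  · intro a ha
    simp only [Finset.mem_filter, Finset.mem_univ, true_and] at ha ⊢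
    exact ha
  · intro a _ b _ h
    exact τ.injective h
  · intro b hb
    refine ⟨τ.symm b, ?_, by simp⟩
    simp only [Finset.mem_filter, Finset.mem_univ, true_and, Function.comp] at hb ⊢
    simpa using hb

lemma ones_runNet {n : ℕ} (C : List (Fin n × Fin n)) (x : Fin n → Bool) :
    ones (runNet C x) = ones x := by
  obtain ⟨τ, h⟩ := runNet_eq_comp C x
  rw [h, ones_comp_perm]

lemma ones_le {n : ℕ} (x : Fin n → Bool) : ones x ≤ n := by
  unfold ones
  simpa using (Finset.card_filter_le Finset.univ (fun i => x i = true))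

/-- The threshold vector with `k` ones. -/
def thr (n k : ℕ) : Fin n → Bool := fun i => decide (n ≤ (i : ℕ) + k)

lemma monotone_thr (n k : ℕ) : Monotone (thr n k) := by
  intro i j hij
  simp only [thr]
  by_cases h : n ≤ (i : ℕ) + k
  · have : n ≤ (j : ℕ) + k := le_trans h (by have := (Fin.le_def.mp hij); omega)
    simp [h, this]
  · simp [h]

lemma ones_thr (n k : ℕ) (hk : k ≤ n) : ones (thr n k) = k := by
  unfold ones thr
  rcases Nat.eq_zero_or_pos k with rfl | hkpos
  · convert Finset.card_empty
    ext i
    simp only [Finset.mem_filter, Finset.mem_univ, true_and, Nat.add_zero,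
      decide_eq_true_eq, Finset.notMem_empty, iff_false]
    have := i.isLt; omega
  · have hlt : n - k < n := by omega
    have : (Finset.univ.filter fun i : Fin n => (decide (n ≤ (i : ℕ) + k)) = true)
        = Finset.Ici (⟨n - k, hlt⟩ : Fin n) := by
      ext i
      simp only [Finset.mem_filter, Finset.mem_univ, true_and, Finset.mem_Ici,
        decide_eq_true_eq, Fin.le_def]
      omega
    rw [this, Fin.card_Ici]
    simp
    omega

/-- A monotone Boolean vector is the threshold vector of its number of ones. -/
lemma monotone_eq_thr {n : ℕ} (x : Fin n → Bool) (hx : Monotone x) :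
    x = thr n (ones x) := by
  funext i
  by_cases h : x i = true
  · have hsub : Finset.Ici i ⊆ Finset.univ.filter fun j => x j = true := by
      intro j hj
      simp only [Finset.mem_Ici] at hj
      have hle := hx hj
      rw [h] at hle
      simp only [Finset.mem_filter, Finset.mem_univ, true_and]
      exact le_antisymm (Bool.le_true _) hle
    have hcard : n - (i : ℕ) ≤ ones x := by
      have := Finset.card_le_card hsub
      rwa [Fin.card_Ici] at this
    have : n ≤ (i : ℕ) + ones x := by have := i.isLt; omega
    simp [thr, this, h]
  · have h' : x i = false := by simpa using h
    have hsub : (Finset.univ.filter fun j => x j = true) ⊆ Finset.Ioi i := by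
      intro j hj
      simp only [Finset.mem_filter, Finset.mem_univ, true_and] at hj
      simp only [Finset.mem_Ioi]
      by_contra hle
      push_neg at hle
      have := hx hle
      rw [hj, h'] at this
      exact absurd this (by simp)
    have hcard : ones x ≤ n - 1 - (i : ℕ) := by
      have := Finset.card_le_card hsub
      rwa [Fin.card_Ioi] at this
    have hi := i.isLt
    have : ¬ n ≤ (i : ℕ) + ones x := by omega
    simp [thr, this, h']

lemma monotone_eq_of_ones_eq {n : ℕ} {x y : Fin n → Bool} (hx : Monotone x)
    (hy : Monotone y) (h : ones x = ones y) : x = y := by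
  rw [monotone_eq_thr x hx, monotone_eq_thr y hy, h]

/-- A standard network fixes monotone vectors. -/
lemma runNet_standard_of_monotone {n : ℕ} {C : List (Fin n × Fin n)} (hC : Standard C)
    {x : Fin n → Bool} (hx : Monotone x) : runNet C x = x := by
  induction C generalizing x with
  | nil => rfl
  | cons c C ih =>
    have hc : c.1 < c.2 := hC c (List.mem_cons_self)
    have hfix : applyComp c x = x := by
      funext k
      simp only [applyComp]
      split_ifs with h1 h2
      · rw [h1, min_eq_left (hx hc.le)]
      · rw [h2, max_eq_right (hx hc.le)]
      · rfl
    rw [runNet_cons, hfix]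
    exact ih (fun d hd => hC d (List.mem_cons_of_mem c hd)) hx

end VV
namespace VV

/-- Embed a comparator on `Fin n` into `Fin (n+1)` (not touching the last channel). -/
def liftC {n : ℕ} (c : Fin n × Fin n) : Fin (n + 1) × Fin (n + 1) :=
  (c.1.castSucc, c.2.castSucc)

lemma applyComp_liftC {n : ℕ} (c : Fin n × Fin n) (y : Fin n → Bool) (a : Bool) :
    applyComp (liftC c) (Fin.snoc y a) = Fin.snoc (applyComp c y) a := by
  funext i
  induction i using Fin.lastCases with
  | last =>
    have h1 : (Fin.last n : Fin (n + 1)) ≠ c.1.castSucc := (Fin.castSucc_lt_last c.1).ne'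
    have h2 : (Fin.last n : Fin (n + 1)) ≠ c.2.castSucc := (Fin.castSucc_lt_last c.2).ne'
    simp [applyComp, liftC, h1, h2]
  | cast k =>
    simp only [applyComp, liftC, Fin.snoc_castSucc, Fin.castSucc_inj]

lemma runNet_liftC {n : ℕ} (C : List (Fin n × Fin n)) (y : Fin n → Bool) (a : Bool) :
    runNet (C.map liftC) (Fin.snoc y a) = Fin.snoc (runNet C y) a := by
  induction C generalizing y with
  | nil => rfl
  | cons c C ih => rw [List.map_cons, runNet_cons, applyComp_liftC, ih, runNet_cons]

lemma standard_liftC {n : ℕ} {C : List (Fin n × Fin n)} (hC : Standard C) :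
    Standard (C.map liftC) := by
  intro c hc
  simp only [List.mem_map] at hc
  obtain ⟨d, hd, rfl⟩ := hc
  simpa [liftC, Fin.castSucc_lt_castSucc_iff] using hC d hd

lemma monotone_snoc_true {m : ℕ} {w : Fin m → Bool} (hw : Monotone w) :
    Monotone (Fin.snoc w true : Fin (m + 1) → Bool) := by
  intro i j hij
  induction j using Fin.lastCases with
  | last => simp [Fin.snoc_last]
  | cast j' =>
    induction i using Fin.lastCases with
    | last => exact absurd (lt_of_le_of_lt hij (Fin.castSucc_lt_last j')) (lt_irrefl _)
    | cast i' =>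
      simp only [Fin.snoc_castSucc]
      exact hw (Fin.castSucc_le_castSucc_iff.mp hij)

/-- The chain `(0,1), (1,2), …, (m-1,m)` moving a maximum to the top channel. -/
def upChain : (m : ℕ) → List (Fin (m + 1) × Fin (m + 1))
  | 0 => []
  | m + 1 => (upChain m).map liftC ++ [((Fin.last m).castSucc, Fin.last (m + 1))]

lemma standard_upChain (m : ℕ) : Standard (upChain m) := by
  induction m with
  | zero => intro c hc; simp [upChain] at hc
  | succ m ih =>
    intro c hc
    simp only [upChain, List.mem_append, List.mem_singleton] at hc
    rcases hc with hc | rfl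
    · exact standard_liftC ih c hc
    · exact Fin.castSucc_lt_last _

lemma upChain_top (m : ℕ) (x : Fin (m + 1) → Bool) (hx : ∃ i, x i = true) :
    runNet (upChain m) x (Fin.last m) = true := by
  induction m with
  | zero =>
    obtain ⟨i, hi⟩ := hx
    have hi0 : i = Fin.last 0 := by
      induction i using Fin.lastCases with
      | last => rfl
      | cast k => exact k.elim0
    rw [← hi0]
    simpa [upChain] using hi
  | succ m ih =>
    rw [upChain, runNet_append]
    set v := runNet ((upChain m).map liftC) x with hv
    have hvs : v = Fin.snoc (runNet (upChain m) (Fin.init x)) (x (Fin.last (m + 1))) := by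
      rw [hv]
      conv_lhs => rw [← Fin.snoc_init_self x]
      exact runNet_liftC _ _ _
    have hc1 : Fin.last (m + 1) ≠ (Fin.last m).castSucc := (Fin.castSucc_lt_last _).ne'
    simp only [runNet_cons, runNet_nil]
    have happ : applyComp ((Fin.last m).castSucc, Fin.last (m + 1)) v (Fin.last (m + 1))
        = max (v ((Fin.last m).castSucc)) (v (Fin.last (m + 1))) := by
      simp [applyComp, hc1]
    rw [happ]
    have key : ∀ j : Fin (m + 2), x j = true →
        max (v ((Fin.last m).castSucc)) (v (Fin.last (m + 1))) = true := by
      intro j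
      induction j using Fin.lastCases with
      | last =>
        intro hlast
        have hv2 : v (Fin.last (m + 1)) = true := by rw [hvs, Fin.snoc_last, hlast]
        simp [hv2]
      | cast k =>
        intro hk
        have hmid : runNet (upChain m) (Fin.init x) (Fin.last m) = true :=
          ih (Fin.init x) ⟨k, by simpa [Fin.init] using hk⟩
        have hv1 : v ((Fin.last m).castSucc) = true := by
          rw [hvs, Fin.snoc_castSucc, hmid]
        simp [hv1]
    obtain ⟨i, hi⟩ := hx
    exact key i hi

/-- A sorting network on `m` channels (selection sort). -/
def sortNet : (m : ℕ) → List (Fin m × Fin m)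
  | 0 => []
  | m + 1 => upChain m ++ (sortNet m).map liftC

lemma sortNet_isSorting (m : ℕ) : IsSortingNet (sortNet m) := by
  induction m with
  | zero =>
    constructor
    · intro c hc; simp [sortNet] at hc
    · intro x i j _; exact i.elim0
  | succ m ih =>
    obtain ⟨ihS, ihM⟩ := ih
    constructor
    · intro c hc
      simp only [sortNet, List.mem_append] at hc
      rcases hc with hc | hc
      · exact standard_upChain m c hc
      · exact standard_liftC ihS c hc
    · intro x
      rw [sortNet, runNet_append]
      set v := runNet (upChain m) x with hv
      have hvs : runNet ((sortNet m).map liftC) v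
          = Fin.snoc (runNet (sortNet m) (Fin.init v)) (v (Fin.last m)) := by
        conv_lhs => rw [← Fin.snoc_init_self v]
        exact runNet_liftC _ _ _
      rw [hvs]
      by_cases hex : ∃ i, x i = true
      · have htop : v (Fin.last m) = true := upChain_top m x hex
        rw [htop]
        exact monotone_snoc_true (ihM _)
      · push_neg at hex
        have hxf : x = fun _ => false := funext fun i => by simpa using hex i
        have hvf : v = fun _ => false := by
          obtain ⟨τ, hτ⟩ := runNet_eq_comp (upChain m) x
          rw [hv, hτ, hxf]; rfl
        have hif : Fin.init v = fun _ => false := by rw [hvf]; rfl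
        rw [hif, hvf]
        obtain ⟨τ, hτ⟩ := runNet_eq_comp (sortNet m) (fun _ => false)
        rw [hτ]
        have : (Fin.snoc ((fun (_ : Fin m) => false) ∘ τ) false : Fin (m+1) → Bool)
            = fun _ => false := by
          funext i
          induction i using Fin.lastCases with
          | last => simp
          | cast k => simp [Function.comp]
        rw [this]
        exact monotone_const

lemma sortSize_mem (m : ℕ) :
    ∃ C : List (Fin m × Fin m), IsSortingNet C ∧ C.length = sortSize m := by
  have hne : {k | ∃ C : List (Fin m × Fin m), IsSortingNet C ∧ C.length = k}.Nonempty :=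
    ⟨(sortNet m).length, sortNet m, sortNet_isSorting m, rfl⟩
  exact Nat.sInf_mem hne

end VV
namespace VV

/-- One step of the token (maximum) trace. -/
def step {m : ℕ} (p : Fin m) (c : Fin m × Fin m) : Fin m :=
  if p = c.1 ∨ p = c.2 then c.2 else p

/-- Final position of the token. -/
def tEnd {m : ℕ} (p : Fin m) : List (Fin m × Fin m) → Fin m
  | [] => p
  | c :: C => tEnd (step p c) C

/-- Number of comparators touched by the token. -/
def tCnt {m : ℕ} (p : Fin m) : List (Fin m × Fin m) → ℕ
  | [] => 0
  | c :: C => (if p = c.1 ∨ p = c.2 then 1 else 0) + tCnt (step p c) C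

lemma tCnt_le_length {m : ℕ} (p : Fin m) (C : List (Fin m × Fin m)) :
    tCnt p C ≤ C.length := by
  induction C generalizing p with
  | nil => simp [tCnt]
  | cons c C ih =>
    simp only [tCnt, List.length_cons]
    have := ih (step p c)
    split_ifs <;> omega

/-- Indicator vector of a channel. -/
def ind {m : ℕ} (p : Fin m) : Fin m → Bool := fun i => decide (i = p)

lemma ones_ind {m : ℕ} (p : Fin m) : ones (ind p) = 1 := by
  unfold ones ind
  have : (Finset.univ.filter fun i : Fin m => (decide (i = p)) = true) = {p} := by
    ext i; simp
  rw [this, Finset.card_singleton]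

lemma monotone_ind_last {m : ℕ} : Monotone (ind (Fin.last m)) := by
  intro i j hij
  by_cases hi : i = Fin.last m
  · have : j = Fin.last m := le_antisymm (Fin.le_last j) (hi ▸ hij)
    simp [ind, hi, this]
  · simp [ind, hi]

lemma applyComp_ind {m : ℕ} {c : Fin m × Fin m} (hc : c.1 < c.2) (p : Fin m) :
    applyComp c (ind p) = ind (step p c) := by
  have hne : c.1 ≠ c.2 := hc.ne
  funext i
  by_cases hp : p = c.1 ∨ p = c.2
  · have hstep : step p c = c.2 := by simp [step, hp]
    rw [hstep]
    have hmin : min (ind p c.1) (ind p c.2) = false := by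
      rcases hp with rfl | rfl
      · simp [ind, hne.symm]
      · simp [ind, hne]
    have hmax : max (ind p c.1) (ind p c.2) = true := by
      rcases hp with rfl | rfl
      · simp [ind]
      · simp [ind]
    simp only [applyComp]
    by_cases h1 : i = c.1
    · rw [if_pos h1, hmin, h1]
      simp [ind, hne]
    · by_cases h2 : i = c.2
      · rw [if_neg h1, if_pos h2, hmax, h2]
        simp [ind]
      · have hip : i ≠ p := by rcases hp with rfl | rfl <;> assumption
        rw [if_neg h1, if_neg h2]
        simp [ind, hip, h2]
  · push_neg at hp
    have hstep : step p c = p := by simp [step, hp.1, hp.2]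
    rw [hstep]
    have hv1 : ind p c.1 = false := by simp [ind, hp.1.symm]
    have hv2 : ind p c.2 = false := by simp [ind, hp.2.symm]
    simp only [applyComp, hv1, hv2]
    by_cases h1 : i = c.1
    · simp [h1, hv1]
    · by_cases h2 : i = c.2
      · simp [h1, h2, hv2]
      · simp [h1, h2]

lemma runNet_ind {m : ℕ} {C : List (Fin m × Fin m)} (hC : Standard C) (p : Fin m) :
    runNet C (ind p) = ind (tEnd p C) := by
  induction C generalizing p with
  | nil => rfl
  | cons c C ih =>
    have hc : c.1 < c.2 := hC c (List.mem_cons_self)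
    rw [runNet_cons, applyComp_ind hc]
    exact ih (fun d hd => hC d (List.mem_cons_of_mem c hd)) (step p c)

lemma ind_injective {m : ℕ} {p q : Fin m} (h : ind p = ind q) : p = q := by
  have := congrFun h p
  simp only [ind, decide_eq_decide] at this
  exact this.mp trivial

/-- In a sorting network every token trace ends at the last channel. -/
lemma tEnd_eq_last {m : ℕ} {C : List (Fin (m + 1) × Fin (m + 1))}
    (hC : IsSortingNet C) (p : Fin (m + 1)) : tEnd p C = Fin.last m := by
  have h1 : runNet C (ind p) = ind (tEnd p C) := runNet_ind hC.1 p
  have h2 : Monotone (runNet C (ind p)) := hC.2 _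
  have h3 : ones (runNet C (ind p)) = 1 := by rw [ones_runNet, ones_ind]
  have h4 : runNet C (ind p) = ind (Fin.last m) := by
    apply monotone_eq_of_ones_eq h2 monotone_ind_last
    rw [h3, ones_ind]
  rw [h1] at h4
  exact ind_injective h4

/-- Kraft-type counting: weighted sum of traces ending at a fixed channel. -/
lemma kraft {m : ℕ} (C : List (Fin m × Fin m)) (hC : ∀ c ∈ C, c.1 ≠ c.2) (z : Fin m) :
    ∑ p : Fin m, (if tEnd p C = z then 2 ^ (C.length - tCnt p C) else 0) ≤ 2 ^ C.length := by
  induction C generalizing z with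
  | nil =>
    simp only [tEnd, tCnt, List.length_nil, Nat.sub_zero, pow_zero]
    rw [Finset.sum_ite_eq' Finset.univ z (fun _ => 1)]
    simp
  | cons c C ih =>
    have hne : c.1 ≠ c.2 := hC c (List.mem_cons_self)
    have hC' : ∀ d ∈ C, d.1 ≠ d.2 := fun d hd => hC d (List.mem_cons_of_mem c hd)
    set L := C.length with hL
    set g : Fin m → ℕ := fun p => if tEnd p C = z then 2 ^ (L - tCnt p C) else 0 with hg
    set f : Fin m → ℕ := fun p =>
      if tEnd p (c :: C) = z then 2 ^ ((c :: C).length - tCnt p (c :: C)) else 0 with hf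
    have hfg_out : ∀ p, p ≠ c.1 → p ≠ c.2 → f p = 2 * g p := by
      intro p h1 h2
      have hor : ¬ (p = c.1 ∨ p = c.2) := by tauto
      have hstep : step p c = p := by simp [step, hor]
      have hcnt : tCnt p (c :: C) = tCnt p C := by simp [tCnt, hor, hstep]
      have hend : tEnd p (c :: C) = tEnd p C := by simp [tEnd, hstep]
      have hle : tCnt p C ≤ L := tCnt_le_length p C
      simp only [hf, hg, hend, hcnt, List.length_cons]
      split_ifs
      · rw [← pow_succ']
        congr 1
        omega
      · rfl
    have hfg_in : ∀ p, (p = c.1 ∨ p = c.2) → f p = g c.2 := by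
      intro p hor
      have hstep : step p c = c.2 := by simp [step, hor]
      have hcnt : tCnt p (c :: C) = 1 + tCnt c.2 C := by simp [tCnt, hor, hstep]
      have hend : tEnd p (c :: C) = tEnd c.2 C := by simp [tEnd, hstep]
      have hle : tCnt c.2 C ≤ L := tCnt_le_length c.2 C
      simp only [hf, hg, hend, hcnt, List.length_cons]
      split_ifs
      · congr 1
        omega
      · rfl
    have key : ∑ p : Fin m, f p ≤ 2 * ∑ p : Fin m, g p := by
      have hb : c.2 ∈ Finset.univ.erase c.1 := by
        simp only [Finset.mem_erase, Finset.mem_univ, and_true]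
        exact hne.symm
      have hsum : ∀ h : Fin m → ℕ, ∑ p : Fin m, h p
          = h c.1 + (h c.2 + ∑ p ∈ (Finset.univ.erase c.1).erase c.2, h p) := by
        intro h
        rw [← Finset.add_sum_erase _ h (Finset.mem_univ c.1), ← Finset.add_sum_erase _ h hb]
      rw [hsum f, hsum g]
      have hS : ∀ p ∈ (Finset.univ.erase c.1).erase c.2, f p = 2 * g p := by
        intro p hp
        simp only [Finset.mem_erase] at hp
        exact hfg_out p hp.2.1 hp.1
      rw [Finset.sum_congr rfl hS, hfg_in c.1 (Or.inl rfl), hfg_in c.2 (Or.inr rfl),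
        ← Finset.mul_sum]
      omega
    calc ∑ p : Fin m, f p ≤ 2 * ∑ p : Fin m, g p := key
      _ ≤ 2 * 2 ^ L := Nat.mul_le_mul_left 2 (ih hC' z)
      _ = 2 ^ (c :: C).length := by rw [List.length_cons, pow_succ]; ring

end VV
namespace VV

/-- The reduced network: remove the token channel, relabelling via `σ`. -/
def reduce {m : ℕ} (σ : Equiv.Perm (Fin m)) (p : Fin m) :
    List (Fin m × Fin m) → List (Fin m × Fin m)
  | [] => []
  | c :: C =>
    if p = c.1 then reduce ((Equiv.swap c.1 c.2).trans σ) c.2 C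
    else if p = c.2 then reduce σ p C
    else (σ c.1, σ c.2) :: reduce σ p C

/-- The final relabelling permutation after processing the whole network. -/
def redPerm {m : ℕ} (σ : Equiv.Perm (Fin m)) (p : Fin m) :
    List (Fin m × Fin m) → Equiv.Perm (Fin m)
  | [] => σ
  | c :: C =>
    if p = c.1 then redPerm ((Equiv.swap c.1 c.2).trans σ) c.2 C
    else redPerm σ p C

lemma reduce_length {m : ℕ} (σ : Equiv.Perm (Fin m)) (p : Fin m)
    (C : List (Fin m × Fin m)) :
    C.length = tCnt p C + (reduce σ p C).length := by
  induction C generalizing σ p with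
  | nil => simp [tCnt, reduce]
  | cons c C ih =>
    by_cases h1 : p = c.1
    · have : p = c.1 ∨ p = c.2 := Or.inl h1
      simp only [reduce, if_pos h1, tCnt, if_pos this, List.length_cons, step]
      have := ih ((Equiv.swap c.1 c.2).trans σ) c.2
      omega
    · by_cases h2 : p = c.2
      · have hor : p = c.1 ∨ p = c.2 := Or.inr h2
        simp only [reduce, if_neg h1, if_pos h2, tCnt, if_pos hor, List.length_cons, step]
        rw [← h2]
        have := ih σ p
        omega
      · have hor : ¬ (p = c.1 ∨ p = c.2) := by tauto
        simp only [reduce, if_neg h1, if_neg h2, tCnt, if_neg hor, List.length_cons, step]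
        have := ih σ p
        omega

lemma reduce_notLast {m : ℕ} (σ : Equiv.Perm (Fin (m + 1))) (p : Fin (m + 1))
    (C : List (Fin (m + 1) × Fin (m + 1))) (hσ : σ p = Fin.last m) :
    ∀ d ∈ reduce σ p C, d.1 ≠ Fin.last m ∧ d.2 ≠ Fin.last m := by
  induction C generalizing σ p with
  | nil => intro d hd; simp [reduce] at hd
  | cons c C ih =>
    by_cases h1 : p = c.1
    · rw [reduce, if_pos h1]
      apply ih
      rw [Equiv.trans_apply, Equiv.swap_apply_right, ← h1, hσ]
    · by_cases h2 : p = c.2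
      · rw [reduce, if_neg h1, if_pos h2]
        exact ih σ p hσ
      · rw [reduce, if_neg h1, if_neg h2]
        intro d hd
        rcases List.mem_cons.mp hd with rfl | hd
        · refine ⟨fun h => h1 (σ.injective ?_), fun h => h2 (σ.injective ?_)⟩
          · rw [hσ]; exact h.symm
          · rw [hσ]; exact h.symm
        · exact ih σ p hσ d hd

/-- Simulation: running the original network on an input whose maximum sits on the
token channel is the same as running the reduced network on the relabelled input. -/
lemma sim {m : ℕ} (C : List (Fin m × Fin m)) (σ : Equiv.Perm (Fin m)) (p : Fin m)
    (X : Fin m → Bool) (hX : X p = true) :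
    runNet C X = fun i => runNet (reduce σ p C) (X ∘ ⇑σ.symm) (redPerm σ p C i) := by
  induction C generalizing σ p X with
  | nil =>
    funext i
    simp [reduce, redPerm, Function.comp]
  | cons c C ih =>
    by_cases h1 : p = c.1
    · have hX1 : X c.1 = true := h1 ▸ hX
      have hXapp : applyComp c X = X ∘ ⇑(Equiv.swap c.1 c.2) := by
        funext i
        simp only [applyComp, Function.comp]
        by_cases hi1 : i = c.1
        · rw [if_pos hi1, hi1, Equiv.swap_apply_left, hX1]
          exact min_eq_right (Bool.le_true _)
        · by_cases hi2 : i = c.2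
          · rw [if_neg hi1, if_pos hi2, hi2, Equiv.swap_apply_right, hX1]
            exact max_eq_left (Bool.le_true _)
          · rw [if_neg hi1, if_neg hi2, Equiv.swap_apply_of_ne_of_ne hi1 hi2]
      have hX'p : (applyComp c X) c.2 = true := by
        rw [hXapp]
        simp only [Function.comp, Equiv.swap_apply_right]
        exact hX1
      rw [runNet_cons, ih ((Equiv.swap c.1 c.2).trans σ) c.2 (applyComp c X) hX'p]
      have hcomp : (applyComp c X) ∘ ⇑((Equiv.swap c.1 c.2).trans σ).symm = X ∘ ⇑σ.symm := by
        funext i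
        simp only [hXapp, Function.comp, Equiv.symm_trans_apply, Equiv.symm_swap,
          Equiv.swap_apply_self]
      rw [hcomp]
      funext i
      simp only [reduce, redPerm, if_pos h1]
    · by_cases h2 : p = c.2
      · have hX2 : X c.2 = true := h2 ▸ hX
        have hXapp : applyComp c X = X := by
          funext i
          simp only [applyComp]
          by_cases hi1 : i = c.1
          · rw [if_pos hi1, hi1, hX2]
            exact min_eq_left (Bool.le_true _)
          · by_cases hi2 : i = c.2
            · rw [if_neg hi1, if_pos hi2, hi2, hX2]
              exact max_eq_right (Bool.le_true _)
            · rw [if_neg hi1, if_neg hi2]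
        rw [runNet_cons, hXapp, ih σ p X hX]
        funext i
        simp only [reduce, redPerm, if_neg h1, if_pos h2]
      · have hXp : (applyComp c X) p = X p := by
          simp only [applyComp, if_neg h1, if_neg h2]
        have happ : (applyComp c X) ∘ ⇑σ.symm = applyComp (σ c.1, σ c.2) (X ∘ ⇑σ.symm) := by
          funext i
          simp only [applyComp, Function.comp]
          by_cases hi1 : σ.symm i = c.1
          · have hi1' : i = σ c.1 := by rw [← hi1]; simp
            rw [if_pos hi1, if_pos hi1']
            simp
          · have h1' : ¬ i = σ c.1 := fun h => hi1 (by rw [h]; simp)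
            by_cases hi2 : σ.symm i = c.2
            · have hi2' : i = σ c.2 := by rw [← hi2]; simp
              rw [if_neg hi1, if_pos hi2, if_neg h1', if_pos hi2']
              simp
            · have h2' : ¬ i = σ c.2 := fun h => hi2 (by rw [h]; simp)
              rw [if_neg hi1, if_neg hi2, if_neg h1', if_neg h2']
        rw [runNet_cons, ih σ p (applyComp c X) (by rw [hXp]; exact hX)]
        funext i
        simp only [reduce, redPerm, if_neg h1, if_neg h2, runNet_cons, happ]

/-- Strip the (untouched) last channel from a network avoiding it. -/
def lowerNet {m : ℕ} (D : List (Fin (m + 1) × Fin (m + 1))) : List (Fin m × Fin m) :=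
  D.filterMap fun c =>
    if h : c.1 ≠ Fin.last m ∧ c.2 ≠ Fin.last m then
      some (c.1.castPred h.1, c.2.castPred h.2)
    else none

lemma lowerNet_spec {m : ℕ} (D : List (Fin (m + 1) × Fin (m + 1)))
    (hD : ∀ d ∈ D, d.1 ≠ Fin.last m ∧ d.2 ≠ Fin.last m) :
    (lowerNet D).map liftC = D ∧ (lowerNet D).length = D.length := by
  induction D with
  | nil => simp [lowerNet]
  | cons c C ih =>
    have hc := hD c (List.mem_cons_self)
    have ih' := ih fun d hd => hD d (List.mem_cons_of_mem c hd)
    have hstep : lowerNet (c :: C) = (c.1.castPred hc.1, c.2.castPred hc.2) :: lowerNet C := by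
      simp only [lowerNet, List.filterMap_cons, dif_pos hc]
    rw [hstep]
    constructor
    · rw [List.map_cons, ih'.1]
      simp [liftC, Fin.castSucc_castPred]
    · simp [List.length_cons, ih'.2]

end VV
namespace VV

/-- Apply a permutation to all comparators of a network. -/
def permNet {m : ℕ} (σ : Equiv.Perm (Fin m)) (C : List (Fin m × Fin m)) :
    List (Fin m × Fin m) :=
  C.map fun d => (σ d.1, σ d.2)

lemma applyComp_perm {m : ℕ} (σ : Equiv.Perm (Fin m)) (d : Fin m × Fin m)
    (v : Fin m → Bool) :
    (applyComp (σ d.1, σ d.2) v) ∘ ⇑σ = applyComp d (v ∘ ⇑σ) := by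
  funext k
  simp only [applyComp, Function.comp]
  by_cases h1 : k = d.1
  · have h1' : σ k = σ d.1 := by rw [h1]
    rw [if_pos h1', if_pos h1]
  · have h1' : ¬ σ k = σ d.1 := fun h => h1 (σ.injective h)
    by_cases h2 : k = d.2
    · have h2' : σ k = σ d.2 := by rw [h2]
      rw [if_neg h1', if_pos h2', if_neg h1, if_pos h2]
    · have h2' : ¬ σ k = σ d.2 := fun h => h2 (σ.injective h)
      rw [if_neg h1', if_neg h2', if_neg h1, if_neg h2]

lemma runNet_permNet {m : ℕ} (σ : Equiv.Perm (Fin m)) (C : List (Fin m × Fin m))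
    (v : Fin m → Bool) :
    runNet (permNet σ C) v = fun i => runNet C (v ∘ ⇑σ) (σ.symm i) := by
  induction C generalizing v with
  | nil =>
    funext i
    simp [permNet, Function.comp]
  | cons d C ih =>
    have hc : permNet σ (d :: C) = (σ d.1, σ d.2) :: permNet σ C := rfl
    rw [hc, runNet_cons, ih (applyComp (σ d.1, σ d.2) v)]
    funext i
    rw [applyComp_perm σ d v, runNet_cons]

/-- Reversed comparator relation. -/
lemma applyComp_flip {m : ℕ} (a b : Fin m) (x : Fin m → Bool) :
    (applyComp (b, a) x) ∘ ⇑(Equiv.swap a b) = applyComp (a, b) x := by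
  funext i
  by_cases h1 : i = a
  · have L2 : applyComp (b, a) x b = min (x b) (x a) := by simp [applyComp]
    have R : applyComp (a, b) x a = min (x a) (x b) := by simp [applyComp]
    rw [Function.comp_apply, h1, Equiv.swap_apply_left, L2, R, min_comm]
  · by_cases h2 : i = b
    · have L2 : applyComp (b, a) x a = max (x b) (x a) := by
        simp only [applyComp]
        rw [if_neg (fun hh : a = b => h1 (h2.trans hh.symm))]
        simp
      have R : applyComp (a, b) x b = max (x a) (x b) := by
        simp only [applyComp]
        rw [if_neg (fun hh : b = a => h1 (h2.trans hh))]
        simp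
      rw [Function.comp_apply, h2, Equiv.swap_apply_right, L2, R, max_comm]
    · have hsw : (Equiv.swap a b) i = i := Equiv.swap_apply_of_ne_of_ne h1 h2
      rw [Function.comp_apply, hsw]
      simp only [applyComp, if_neg h1, if_neg h2]

/-- Standardization (untangling) of a generalized comparator network. -/
def stdz {m : ℕ} : List (Fin m × Fin m) → List (Fin m × Fin m)
  | [] => []
  | c :: C =>
    if c.1 < c.2 then c :: stdz C
    else if c.2 < c.1 then
      (c.2, c.1) :: stdz (permNet (Equiv.swap c.1 c.2) C)
    else stdz C
termination_by C => C.length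
decreasing_by
  · simp
  · simp [permNet]
  · simp

lemma stdz_length {m : ℕ} (C : List (Fin m × Fin m)) :
    (stdz C).length ≤ C.length := by
  induction C using stdz.induct with
  | case1 => simp [stdz]
  | case2 c C h ih =>
    rw [stdz, if_pos h]
    simpa using ih
  | case3 c C h h' ih =>
    rw [stdz, if_neg h, if_pos h']
    simpa [permNet] using ih
  | case4 c C h h' ih =>
    rw [stdz, if_neg h, if_neg h']
    simpa using Nat.le_succ_of_le ih

lemma stdz_standard {m : ℕ} (C : List (Fin m × Fin m)) :
    Standard (stdz C) := by
  induction C using stdz.induct with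
  | case1 => intro d hd; simp [stdz] at hd
  | case2 c C h ih =>
    rw [stdz, if_pos h]
    intro d hd
    rcases List.mem_cons.mp hd with rfl | hd
    · exact h
    · exact ih d hd
  | case3 c C h h' ih =>
    rw [stdz, if_neg h, if_pos h']
    intro d hd
    rcases List.mem_cons.mp hd with rfl | hd
    · exact h'
    · exact ih d hd
  | case4 c C h h' ih =>
    rw [stdz, if_neg h, if_neg h']
    exact ih

lemma stdz_perm {m : ℕ} (C : List (Fin m × Fin m)) :
    ∃ π : Equiv.Perm (Fin m), ∀ x : Fin m → Bool,
      runNet (stdz C) x = fun i => runNet C x (π i) := by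
  induction C using stdz.induct with
  | case1 => exact ⟨1, fun x => by funext i; simp [stdz]⟩
  | case2 c C h ih =>
    obtain ⟨π, hπ⟩ := ih
    refine ⟨π, fun x => ?_⟩
    rw [stdz, if_pos h, runNet_cons, hπ (applyComp c x)]
    funext i
    rw [runNet_cons]
  | case3 c C h h' ih =>
    obtain ⟨π, hπ⟩ := ih
    refine ⟨π.trans (Equiv.swap c.1 c.2).symm, fun x => ?_⟩
    rw [stdz, if_neg h, if_pos h', runNet_cons, hπ (applyComp (c.2, c.1) x)]
    funext i
    rw [runNet_permNet]
    have hflip : (applyComp (c.2, c.1) x) ∘ ⇑(Equiv.swap c.1 c.2)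
        = applyComp (c.1, c.2) x := applyComp_flip c.1 c.2 x
    rw [hflip]
    simp only [runNet_cons, Equiv.trans_apply, Equiv.symm_swap]
  | case4 c C h h' ih =>
    obtain ⟨π, hπ⟩ := ih
    have hcc : c.1 = c.2 := le_antisymm (not_lt.mp h') (not_lt.mp h)
    refine ⟨π, fun x => ?_⟩
    have hfix : applyComp c x = x := by
      funext k
      simp only [applyComp]
      by_cases h1 : k = c.1
      · rw [if_pos h1, ← hcc, min_self, h1]
      · by_cases h2 : k = c.2
        · rw [if_neg h1, if_pos h2, hcc, max_self, h2]
        · rw [if_neg h1, if_neg h2]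
    rw [stdz, if_neg h, if_neg h', hπ x]
    funext i
    rw [runNet_cons, hfix]

end VV

namespace VV

lemma ones_snoc_true {n : ℕ} (y : Fin n → Bool) :
    ones (Fin.snoc y true : Fin (n + 1) → Bool) = ones y + 1 := by
  unfold ones
  rw [Finset.card_filter, Finset.card_filter, Fin.sum_univ_castSucc]
  simp [Fin.snoc_castSucc, Fin.snoc_last]

end VV

/-- Van Voorhis' lemma: `S(n+1) ≥ S(n) + ⌈log₂ n⌉` for every `n ≥ 1`. -/
theorem vanVoorhis (n : ℕ) (hn : 1 ≤ n) :
    sortSize n + Nat.clog 2 n ≤ sortSize (n + 1) := by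
  classical
  obtain ⟨C, hCsort, hClen⟩ := VV.sortSize_mem (n + 1)
  obtain ⟨j, -, hjmax⟩ := Finset.exists_max_image Finset.univ
    (fun p : Fin (n + 1) => VV.tCnt p C) ⟨0, Finset.mem_univ 0⟩
  set L := C.length with hL
  set t := VV.tCnt j C with ht
  have htL : t ≤ L := VV.tCnt_le_length j C
  -- Kraft bound gives `n + 1 ≤ 2 ^ t`
  have hKraft := VV.kraft C (fun c hc => (hCsort.1 c hc).ne) (Fin.last n)
  have hterm : ∀ p : Fin (n + 1), 2 ^ (L - t)
      ≤ (if VV.tEnd p C = Fin.last n then 2 ^ (L - VV.tCnt p C) else 0) := by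
    intro p
    rw [if_pos (VV.tEnd_eq_last hCsort p)]
    exact Nat.pow_le_pow_right (by norm_num)
      (Nat.sub_le_sub_left (hjmax p (Finset.mem_univ p)) L)
  have hsum : (n + 1) * 2 ^ (L - t) ≤ 2 ^ L := by
    have h1 : ∑ _p : Fin (n + 1), 2 ^ (L - t) ≤ ∑ p : Fin (n + 1),
        (if VV.tEnd p C = Fin.last n then 2 ^ (L - VV.tCnt p C) else 0) :=
      Finset.sum_le_sum fun p _ => hterm p
    have h2 : ∑ _p : Fin (n + 1), 2 ^ (L - t) = (n + 1) * 2 ^ (L - t) := by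
      rw [Finset.sum_const, Finset.card_univ, Fintype.card_fin, smul_eq_mul]
    calc (n + 1) * 2 ^ (L - t) = ∑ _p : Fin (n + 1), 2 ^ (L - t) := h2.symm
      _ ≤ _ := h1
      _ ≤ 2 ^ L := hKraft
  have hpow : n + 1 ≤ 2 ^ t := by
    have h2 : (2 : ℕ) ^ L = 2 ^ t * 2 ^ (L - t) := by
      rw [← pow_add]; congr 1; omega
    rw [h2] at hsum
    exact Nat.le_of_mul_le_mul_right hsum (pow_pos (by norm_num) _)
  have hclog : Nat.clog 2 n ≤ t :=
    le_trans (Nat.clog_mono_right 2 (Nat.le_succ n))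
      ((Nat.clog_le_iff_le_pow (by norm_num)).mpr hpow)
  -- build the reduced standard sorting network `E` on `n` channels
  set σ0 : Equiv.Perm (Fin (n + 1)) := Equiv.swap j (Fin.last n) with hσ0
  have hσ0j : σ0 j = Fin.last n := Equiv.swap_apply_left _ _
  set D := VV.reduce σ0 j C with hD
  set ρ := VV.redPerm σ0 j C with hρ
  have hDlen : L = t + D.length := VV.reduce_length σ0 j C
  have hDnl := VV.reduce_notLast σ0 j C hσ0j
  obtain ⟨hmap, hlowlen⟩ := VV.lowerNet_spec D hDnl
  set E := VV.stdz (VV.lowerNet D) with hE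
  have hElen : E.length ≤ D.length := le_trans (VV.stdz_length _) (le_of_eq hlowlen)
  obtain ⟨π, hπ⟩ := VV.stdz_perm (VV.lowerNet D)
  have hEstd : Standard E := VV.stdz_standard _
  -- the output of `E` only depends on the number of ones of the input
  have pipe : ∀ y : Fin n → Bool, runNet E y
      = fun i => VV.thr (n + 1) (ones y + 1) (ρ.symm ((π i).castSucc)) := by
    intro y
    have hsnoc : ((Fin.snoc y true ∘ ⇑σ0) ∘ ⇑σ0.symm)
        = (Fin.snoc y true : Fin (n + 1) → Bool) := by
      funext i; simp [Function.comp]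
    have hXj : (Fin.snoc y true ∘ ⇑σ0) j = true := by
      simp only [Function.comp, hσ0j, Fin.snoc_last]
    have hsim := VV.sim C σ0 j (Fin.snoc y true ∘ ⇑σ0) hXj
    rw [hsnoc] at hsim
    have hDrun : runNet D (Fin.snoc y true) = Fin.snoc (runNet (VV.lowerNet D) y) true := by
      conv_lhs => rw [← hmap]
      exact VV.runNet_liftC _ y true
    have hCX : runNet C (Fin.snoc y true ∘ ⇑σ0) = VV.thr (n + 1) (ones y + 1) := by
      have hmono := hCsort.2 (Fin.snoc y true ∘ ⇑σ0)
      have hones : ones (runNet C (Fin.snoc y true ∘ ⇑σ0)) = ones y + 1 := by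
        rw [VV.ones_runNet, VV.ones_comp_perm (Fin.snoc y true) σ0, VV.ones_snoc_true]
      have hthr := VV.monotone_eq_thr _ hmono
      rw [hones] at hthr
      exact hthr
    funext i
    have h1 : runNet (VV.lowerNet D) y (π i) = runNet D (Fin.snoc y true) ((π i).castSucc) := by
      rw [hDrun, Fin.snoc_castSucc]
    have h2 : runNet D (Fin.snoc y true) ((π i).castSucc)
        = runNet C (Fin.snoc y true ∘ ⇑σ0) (ρ.symm ((π i).castSucc)) := by
      rw [hsim]
      simp [hρ, hD]
    have step1 : runNet E y i = runNet (VV.lowerNet D) y (π i) := congrFun (hπ y) i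
    rw [step1, h1, h2, hCX]
  have hEmono : ∀ y : Fin n → Bool, Monotone (runNet E y) := by
    intro y
    have hys : runNet E y = runNet E (VV.thr n (ones y)) := by
      rw [pipe y, pipe (VV.thr n (ones y)), VV.ones_thr n (ones y) (VV.ones_le y)]
    rw [hys, VV.runNet_standard_of_monotone hEstd (VV.monotone_thr n (ones y))]
    exact VV.monotone_thr n (ones y)
  have hSle : sortSize n ≤ E.length := Nat.sInf_le ⟨E, ⟨hEstd, hEmono⟩, rfl⟩
  omega
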